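/- Let 0 < α < n, φ_ε as above normalized: φ̃_ε = φ_ε / ‖φ_ε‖_{n/α}. Then there is a constant C (independent of ε) such that for all x with |x| ≤ ε/2, I_α φ̃_ε(x)^{n/(n−α)} ≥ |B₁| log(r₀^n/ε^n) − C, where I_α f(x) = ∫ |x−y|^{α−n} f(y) dy. -/

import Mathlib

open MeasureTheory Set Metric

lemma radial_integral_aux (n : ℕ) (hn : 0 < n) (ε r₀ c : ℝ) (hε : 0 < ε) (hεr : ε < r₀) :
    ∫ y : EuclideanSpace ℝ (Fin n), (if ε < ‖y‖ ∧ ‖y‖ < r₀ then ‖y‖ ^ c else 0)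
      = (n : ℝ) * (volume (ball (0 : EuclideanSpace ℝ (Fin n)) 1)).toReal
          * ∫ t in Ioo ε r₀, t ^ ((n : ℝ) - 1 + c) := by
  haveI : Nontrivial (EuclideanSpace ℝ (Fin n)) := by
    have : 0 < Module.finrank ℝ (EuclideanSpace ℝ (Fin n)) := by
      rw [finrank_euclideanSpace_fin]; exact hn
    exact Module.nontrivial_of_finrank_pos this
  have key := MeasureTheory.integral_fun_norm_addHaar
    (volume : Measure (EuclideanSpace ℝ (Fin n)))
    (fun t : ℝ => if ε < t ∧ t < r₀ then t ^ c else 0)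
  rw [finrank_euclideanSpace_fin] at key
  rw [key]
  have hind : (fun y : ℝ => y ^ (n - 1) • (if ε < y ∧ y < r₀ then y ^ c else 0))
      = (Ioo ε r₀).indicator (fun t : ℝ => t ^ ((n : ℝ) - 1 + c)) := by
    funext y
    by_cases hy : ε < y ∧ y < r₀
    · have hy0 : 0 < y := hε.trans hy.1
      rw [if_pos hy, indicator_of_mem (by exact ⟨hy.1, hy.2⟩)]
      rw [smul_eq_mul, Real.rpow_add hy0, ← Real.rpow_natCast y (n-1)]
      congr 1
      push_cast [Nat.cast_sub hn]
      ring
    · rw [if_neg hy, indicator_of_notMem (by simpa [Set.mem_Ioo] using hy)]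
      simp
  have hsub : Ioo ε r₀ ∩ Ioi (0:ℝ) = Ioo ε r₀ :=
    inter_eq_left.mpr (fun t ht => lt_trans hε ht.1)
  rw [hind, integral_indicator measurableSet_Ioo, Measure.restrict_restrict measurableSet_Ioo,
    hsub]
  rw [nsmul_eq_mul, smul_eq_mul, mul_assoc]
  rfl

lemma ind_integrable (n : ℕ) {ε r₀ : ℝ} (c : ℝ) (hε : 0 < ε) (hc : c ≤ 0) :
    Integrable (fun y : EuclideanSpace ℝ (Fin n) =>
      if ε < ‖y‖ ∧ ‖y‖ < r₀ then ‖y‖ ^ c else 0) := by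
  have hmeas : Measurable (fun y : EuclideanSpace ℝ (Fin n) =>
      if ε < ‖y‖ ∧ ‖y‖ < r₀ then ‖y‖ ^ c else 0) := by
    apply Measurable.ite _ (measurable_norm.pow measurable_const) measurable_const
    exact (measurableSet_lt measurable_const measurable_norm).inter
      (measurableSet_lt measurable_norm measurable_const)
  refine Integrable.mono'
    (g := (ball (0 : EuclideanSpace ℝ (Fin n)) r₀).indicator fun _ => ε ^ c) ?_
    hmeas.aestronglyMeasurable ?_
  · exact (integrableOn_const measure_ball_lt_top.ne).integrable_indicator
      measurableSet_ball
  · filter_upwards with y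
    by_cases hy : ε < ‖y‖ ∧ ‖y‖ < r₀
    · rw [if_pos hy, Real.norm_eq_abs, abs_of_nonneg (Real.rpow_nonneg (norm_nonneg y) c),
        indicator_of_mem (by simpa [mem_ball_zero_iff] using hy.2)]
      exact Real.rpow_le_rpow_of_nonpos hε hy.1.le hc
    · rw [if_neg hy, norm_zero]
      exact indicator_nonneg (fun _ _ => Real.rpow_nonneg hε.le c) y

lemma final_alg (nr α : ℝ) (h0 : 0 < α) (h1 : α < nr) (L C₁ I : ℝ) (hL : 0 < L)
    (hC₁ : 0 ≤ C₁) (hI0 : 0 ≤ I) (hIL : L - C₁ ≤ I) :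
    L - (1 + max (α/(nr-α)) 1) * C₁ ≤ (I / L ^ (α/nr)) ^ (nr/(nr-α)) := by
  set K := max (α/(nr-α)) 1 with hKdef
  have hnα : 0 < nr - α := by linarith
  have hn0 : 0 < nr := by linarith
  have hq0 : 0 ≤ α/(nr-α) := by positivity
  have hK1 : 1 ≤ K := le_max_right _ _
  have hKq : α/(nr-α) ≤ K := le_max_left _ _
  have hK0 : 0 ≤ K := by linarith
  have hLp : 0 < L ^ (α/nr) := Real.rpow_pos_of_pos hL _
  rcases le_or_gt L (2*C₁) with hcase | hcase
  · have h2 : L - (1+K)*C₁ ≤ 0 := by nlinarith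
    exact h2.trans (Real.rpow_nonneg (div_nonneg hI0 hLp.le) _)
  · have hM : 0 < L - C₁ := by linarith
    have s1 : ((L-C₁) / L ^ (α/nr)) ^ (nr/(nr-α)) ≤ (I / L ^ (α/nr)) ^ (nr/(nr-α)) := by
      gcongr
    refine le_trans ?_ s1
    have he1 : α/nr * (nr/(nr-α)) = α/(nr-α) := by field_simp
    have he2 : nr/(nr-α) = 1 + α/(nr-α) := by field_simp; ring
    have hsplit : ((L-C₁) / L ^ (α/nr)) ^ (nr/(nr-α))
        = (L-C₁) * ((L-C₁)/L) ^ (α/(nr-α)) := by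
      rw [Real.div_rpow hM.le hLp.le, ← Real.rpow_mul hL.le, he1,
        Real.div_rpow hM.le hL.le]
      nth_rewrite 1 [he2]
      rw [Real.rpow_add hM, Real.rpow_one]
      ring
    rw [hsplit]
    set s := C₁ / L with hsdef
    have hs0 : 0 ≤ s := div_nonneg hC₁ hL.le
    have hs1 : s < 1 := by rw [hsdef, div_lt_one hL]; linarith
    have hsL : s * L = C₁ := div_mul_cancel₀ _ hL.ne'
    have hdiv : (L-C₁)/L = 1 - s := by rw [hsdef]; field_simp
    have hbern : 1 - K*s ≤ (1-s) ^ (α/(nr-α)) := by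
      rcases le_total 1 (α/(nr-α)) with hq1 | hq1
      · have hb := one_add_mul_self_le_rpow_one_add (s := -s) (by linarith) hq1
        have : (1 : ℝ) + α/(nr-α) * (-s) ≤ (1 - s) ^ (α/(nr-α)) := by
          simpa [sub_eq_add_neg] using hb
        nlinarith [mul_le_mul_of_nonneg_right hKq hs0]
      · have hx : (1:ℝ) - s ≤ 1 := by linarith
        have h1s : 0 < 1 - s := by linarith
        have := Real.rpow_le_rpow_of_exponent_ge h1s hx hq1
        rw [Real.rpow_one] at this
        nlinarith [mul_le_mul_of_nonneg_right hK1 hs0]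
    rw [hdiv]
    have f1 : (L-C₁)*(1-K*s) ≤ (L-C₁)*((1-s) ^ (α/(nr-α))) :=
      mul_le_mul_of_nonneg_left hbern hM.le
    refine le_trans ?_ f1
    nlinarith [mul_nonneg (mul_nonneg hK0 hs0) hC₁]

theorem stmt_13 (n : ℕ) (hn : 0 < n) (α : ℝ) (hα : 0 < α) (hαn : α < n)
    (r₀ : ℝ) (hr₀pos : 0 < r₀) (hr₀ : r₀ ≤ 1) :
    ∃ C : ℝ, ∀ ε : ℝ, 0 < ε → ε < r₀ →
      ∀ x : EuclideanSpace ℝ (Fin n), ‖x‖ ≤ ε / 2 →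
        (volume (ball (0 : EuclideanSpace ℝ (Fin n)) 1)).toReal
            * Real.log (r₀ ^ n / ε ^ n) - C
          ≤ ((∫ y : EuclideanSpace ℝ (Fin n),
                ‖x - y‖ ^ (α - (n : ℝ)) *
                  (if ε < ‖y‖ ∧ ‖y‖ < r₀ then ‖y‖ ^ (-α) else 0)) /
              ((volume (ball (0 : EuclideanSpace ℝ (Fin n)) 1)).toReal
                * Real.log (r₀ ^ n / ε ^ n)) ^ (α / n))
            ^ ((n : ℝ) / ((n : ℝ) - α)) := by
  have hnR : 0 < (n:ℝ) := Nat.cast_pos.2 hn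
  have hnα : 0 < (n:ℝ) - α := by linarith
  set V := (volume (ball (0 : EuclideanSpace ℝ (Fin n)) 1)).toReal with hVdef
  have hV0 : 0 < V :=
    ENNReal.toReal_pos (measure_ball_pos volume _ one_pos).ne' measure_ball_lt_top.ne
  refine ⟨(1 + max (α/((n:ℝ)-α)) 1) * ((n:ℝ)*((n:ℝ)-α)*V/2), ?_⟩
  intro ε hε hεr x hx
  set L := V * Real.log (r₀^n/ε^n) with hLdef
  have hlog : 0 < Real.log (r₀^n/ε^n) :=
    Real.log_pos ((one_lt_div (pow_pos hε n)).2 (pow_lt_pow_left₀ hεr hε.le hn.ne'))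
  have hL0 : 0 < L := mul_pos hV0 hlog
  -- the two radial integrals
  have hA : (∫ y : EuclideanSpace ℝ (Fin n),
      (if ε < ‖y‖ ∧ ‖y‖ < r₀ then ‖y‖ ^ (-(n:ℝ)) else 0)) = L := by
    rw [radial_integral_aux n hn ε r₀ _ hε hεr]
    have hinner : (∫ t in Ioo ε r₀, t ^ ((n:ℝ) - 1 + -(n:ℝ))) = Real.log (r₀/ε) := by
      rw [show (n:ℝ) - 1 + -(n:ℝ) = -1 by ring, ← integral_Ioc_eq_integral_Ioo,
        ← intervalIntegral.integral_of_le hεr.le]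
      have hcg : (∫ t in ε..r₀, t ^ (-1:ℝ)) = ∫ t in ε..r₀, t⁻¹ := by
        apply intervalIntegral.integral_congr
        intro t ht
        rw [Set.uIcc_of_le hεr.le] at ht
        show t ^ (-1:ℝ) = t⁻¹
        rw [Real.rpow_neg (le_trans hε.le ht.1), Real.rpow_one]
      rw [hcg, integral_inv_of_pos hε (hε.trans hεr)]
    rw [hinner, hLdef, ← div_pow, Real.log_pow]
    push_cast
    ring
  set B := (∫ y : EuclideanSpace ℝ (Fin n),
      (if ε < ‖y‖ ∧ ‖y‖ < r₀ then ‖y‖ ^ (-(n:ℝ)-1) else 0)) with hBdef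
  have hB : B ≤ (n:ℝ) * V * ε⁻¹ := by
    rw [hBdef, radial_integral_aux n hn ε r₀ _ hε hεr]
    have hinner : (∫ t in Ioo ε r₀, t ^ ((n:ℝ) - 1 + (-(n:ℝ)-1))) = ε⁻¹ - r₀⁻¹ := by
      rw [show (n:ℝ) - 1 + (-(n:ℝ)-1) = -2 by ring, ← integral_Ioc_eq_integral_Ioo,
        ← intervalIntegral.integral_of_le hεr.le,
        integral_rpow (Or.inr ⟨by norm_num, by
          rw [Set.uIcc_of_le hεr.le]
          simp only [Set.mem_Icc, not_and, not_le]
          intro h; linarith⟩)]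
      norm_num
      rw [show (-1:ℝ) = -(1:ℝ) by norm_num, Real.rpow_neg hr₀pos.le,
        Real.rpow_neg hε.le, Real.rpow_one, Real.rpow_one]
      ring
    rw [hinner, ← hVdef]
    have h1 : (0:ℝ) ≤ r₀⁻¹ := by positivity
    nlinarith [mul_nonneg (mul_nonneg hnR.le hV0.le) h1]
  have hB0 : 0 ≤ B := by
    rw [hBdef]
    apply integral_nonneg
    intro y
    by_cases hy : ε < ‖y‖ ∧ ‖y‖ < r₀ <;>
      simp [hy, Real.rpow_nonneg (norm_nonneg y)]
  -- integrability of the main integrand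
  set c : ℝ := ((n:ℝ)-α)*ε/2 with hcdef
  have hc0 : 0 ≤ c := by positivity
  set F : EuclideanSpace ℝ (Fin n) → ℝ := fun y =>
    ‖x - y‖ ^ (α - (n:ℝ)) * (if ε < ‖y‖ ∧ ‖y‖ < r₀ then ‖y‖ ^ (-α) else 0) with hFdef
  set G : EuclideanSpace ℝ (Fin n) → ℝ := fun y =>
    (if ε < ‖y‖ ∧ ‖y‖ < r₀ then ‖y‖ ^ (-(n:ℝ)) else 0)
      - c * (if ε < ‖y‖ ∧ ‖y‖ < r₀ then ‖y‖ ^ (-(n:ℝ)-1) else 0) with hGdef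
  have h1i := ind_integrable n (r₀ := r₀) (-(n:ℝ)) hε (by linarith)
  have h2i := ind_integrable n (r₀ := r₀) (-(n:ℝ)-1) hε (by linarith)
  have hGi : Integrable G := h1i.sub (h2i.const_mul c)
  have hcond : MeasurableSet {y : EuclideanSpace ℝ (Fin n) | ε < ‖y‖ ∧ ‖y‖ < r₀} :=
    (measurableSet_lt measurable_const measurable_norm).inter
      (measurableSet_lt measurable_norm measurable_const)
  have hFm : Measurable F := by
    apply Measurable.mul
    · exact ((measurable_const.sub measurable_id).norm.pow measurable_const)
    · exact Measurable.ite hcond (measurable_norm.pow measurable_const) measurable_const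
  have hFi : Integrable F := by
    refine Integrable.mono'
      (g := (ball (0 : EuclideanSpace ℝ (Fin n)) r₀).indicator
        fun _ => (ε/2) ^ (α-(n:ℝ)) * ε ^ (-α)) ?_ hFm.aestronglyMeasurable ?_
    · exact (integrableOn_const measure_ball_lt_top.ne).integrable_indicator
        measurableSet_ball
    · filter_upwards with y
      by_cases hy : ε < ‖y‖ ∧ ‖y‖ < r₀
      · have hd : ε/2 ≤ ‖x - y‖ := by
          have h1 : ‖y‖ - ‖x‖ ≤ ‖y - x‖ := norm_sub_norm_le y x
          rw [norm_sub_rev y x] at h1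
          linarith [hy.1]
        have e1 : ‖x - y‖ ^ (α-(n:ℝ)) ≤ (ε/2) ^ (α-(n:ℝ)) :=
          Real.rpow_le_rpow_of_nonpos (by positivity) hd (by linarith)
        have e2 : ‖y‖ ^ (-α) ≤ ε ^ (-α) :=
          Real.rpow_le_rpow_of_nonpos hε hy.1.le (by linarith)
        rw [hFdef]
        simp only [if_pos hy]
        rw [Real.norm_eq_abs, abs_of_nonneg (mul_nonneg (Real.rpow_nonneg (norm_nonneg _) _)
          (Real.rpow_nonneg (norm_nonneg _) _)),
          indicator_of_mem (by simpa [mem_ball_zero_iff] using hy.2)]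
        exact mul_le_mul e1 e2 (Real.rpow_nonneg (norm_nonneg _) _) (by positivity)
      · rw [hFdef]
        simp only [if_neg hy, mul_zero, norm_zero]
        exact indicator_nonneg (fun _ _ => by positivity) y
  -- pointwise comparison
  have hkey : G ≤ F := by
    intro y
    by_cases hy : ε < ‖y‖ ∧ ‖y‖ < r₀
    · rw [hGdef, hFdef]
      simp only [if_pos hy]
      set r := ‖y‖ with hrdef
      have hr0 : 0 < r := hε.trans hy.1
      have hd0 : 0 < ‖x - y‖ := by
        have h1 : ‖y‖ - ‖x‖ ≤ ‖y - x‖ := norm_sub_norm_le y x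
        rw [norm_sub_rev y x] at h1
        have := hy.1
        linarith
      have hdle : ‖x - y‖ ≤ r + ε/2 := by
        have := norm_sub_le x y
        linarith
      set t : ℝ := ε/(2*r) with htdef
      have ht0 : 0 < t := by positivity
      have hrt : r + ε/2 = r * (1+t) := by
        rw [htdef]; field_simp
      have step1 : (r + ε/2) ^ (α-(n:ℝ)) ≤ ‖x - y‖ ^ (α-(n:ℝ)) :=
        Real.rpow_le_rpow_of_nonpos hd0 hdle (by linarith)
      have step3 : (r * (1+t)) ^ (α-(n:ℝ)) = r ^ (α-(n:ℝ)) * (1+t) ^ (α-(n:ℝ)) :=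
        Real.mul_rpow hr0.le (by linarith)
      have step4 : 1 + (α-(n:ℝ))*t ≤ (1+t) ^ (α-(n:ℝ)) := by
        have l1 : (1+t) ^ (α-(n:ℝ)) = Real.exp ((α-(n:ℝ)) * Real.log (1+t)) := by
          rw [Real.rpow_def_of_pos (by linarith), mul_comm]
        have l2 : (α-(n:ℝ))*Real.log (1+t) + 1 ≤ Real.exp ((α-(n:ℝ))*Real.log (1+t)) :=
          Real.add_one_le_exp _
        have l3 : Real.log (1+t) ≤ t := by
          have := Real.log_le_sub_one_of_pos (show (0:ℝ) < 1+t by linarith)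
          linarith
        have l4 : (α-(n:ℝ))*t ≤ (α-(n:ℝ))*Real.log (1+t) :=
          mul_le_mul_of_nonpos_left l3 (by linarith)
        linarith
      -- expand the product
      have e1 : r ^ (α - (n:ℝ)) * r ^ (-α) = r ^ (-(n:ℝ)) := by
        rw [← Real.rpow_add hr0]; ring_nf
      have e2 : r ^ (-(n:ℝ)) * r⁻¹ = r ^ (-(n:ℝ)-1) := by
        rw [show r⁻¹ = r ^ (-1:ℝ) by
          rw [show (-1:ℝ) = -(1:ℝ) by norm_num, Real.rpow_neg hr0.le, Real.rpow_one],
          ← Real.rpow_add hr0]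
        ring_nf
      have et : t = (ε/2) * r⁻¹ := by rw [htdef]; field_simp
      have m2 : (r + ε/2) ^ (α-(n:ℝ)) * r ^ (-α) ≤ ‖x - y‖ ^ (α-(n:ℝ)) * r ^ (-α) :=
        mul_le_mul_of_nonneg_right step1 (Real.rpow_nonneg hr0.le _)
      have m4 : r ^ (α-(n:ℝ)) * (1 + (α-(n:ℝ))*t) ≤ r ^ (α-(n:ℝ)) * (1+t) ^ (α-(n:ℝ)) :=
        mul_le_mul_of_nonneg_left step4 (Real.rpow_nonneg hr0.le _)
      have m5 : r ^ (α-(n:ℝ)) * (1 + (α-(n:ℝ))*t) * r ^ (-α)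
          ≤ (r + ε/2) ^ (α-(n:ℝ)) * r ^ (-α) := by
        rw [hrt, step3]
        exact mul_le_mul_of_nonneg_right m4 (Real.rpow_nonneg hr0.le _)
      have expand : r ^ (α-(n:ℝ)) * (1 + (α-(n:ℝ))*t) * r ^ (-α)
          = r ^ (-(n:ℝ)) - c * r ^ (-(n:ℝ)-1) := by
        rw [hcdef]
        calc r ^ (α-(n:ℝ)) * (1 + (α-(n:ℝ))*t) * r ^ (-α)
            = r ^ (α-(n:ℝ)) * r ^ (-α) + (α-(n:ℝ)) * ((ε/2) * (r ^ (α-(n:ℝ)) * r ^ (-α) * r⁻¹)) := by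
              rw [et]; ring
          _ = r ^ (-(n:ℝ)) + (α-(n:ℝ)) * ((ε/2) * (r ^ (-(n:ℝ)) * r⁻¹)) := by rw [e1]
          _ = r ^ (-(n:ℝ)) + (α-(n:ℝ)) * ((ε/2) * r ^ (-(n:ℝ)-1)) := by rw [e2]
          _ = r ^ (-(n:ℝ)) - ((n:ℝ)-α)*ε/2 * r ^ (-(n:ℝ)-1) := by ring
      linarith [m2, m5, expand ▸ m5]
    · rw [hGdef, hFdef]
      simp [if_neg hy]
  have hFnn : ∀ y, 0 ≤ F y := by
    intro y
    rw [hFdef]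
    by_cases hy : ε < ‖y‖ ∧ ‖y‖ < r₀ <;>
      simp [hy, mul_nonneg, Real.rpow_nonneg (norm_nonneg _)]
  have hI0 : 0 ≤ ∫ y, F y := integral_nonneg hFnn
  have hGint : (∫ y, G y) = L - c * B := by
    rw [hGdef]
    rw [integral_sub h1i (h2i.const_mul c), integral_const_mul, hA, hBdef]
  have hIL : L - (n:ℝ)*((n:ℝ)-α)*V/2 ≤ ∫ y, F y := by
    have hmono : (∫ y, G y) ≤ ∫ y, F y := integral_mono hGi hFi hkey
    have hcB : c * B ≤ (n:ℝ)*((n:ℝ)-α)*V/2 := by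
      have h1 : c * B ≤ c * ((n:ℝ) * V * ε⁻¹) := mul_le_mul_of_nonneg_left hB hc0
      have h2 : c * ((n:ℝ) * V * ε⁻¹) = (n:ℝ)*((n:ℝ)-α)*V/2 := by
        rw [hcdef]; field_simp
      linarith
    rw [hGint] at hmono
    linarith
  exact final_alg (n:ℝ) α hα hαn L ((n:ℝ)*((n:ℝ)-α)*V/2) (∫ y, F y) hL0 (by positivity)
    hI0 hIL
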